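/- There exists a unique twice continuously differentiable function w : [0,∞) → ℝ satisfying w''(t) − (3 g(t)² − 1) w(t) = g'(t) for all t ≥ 0, w(0) = 0, and w(t) → 0 as t → ∞; moreover this w is exponentially decaying (there exist C > 0 and β > 0 with |w(t)| ≤ C e^{−β t} for all t ≥ 0). -/

import Mathlib

/-- The heteroclinic solution `g(t) = tanh(t/√2)` of the 1-D Allen–Cahn equation. -/
noncomputable def hetero (t : ℝ) : ℝ := Real.tanh (t / Real.sqrt 2)

open Real Set Filter


section helpers
lemma tanh_hasDerivAt (x : ℝ) : HasDerivAt Real.tanh (1 - Real.tanh x ^ 2) x := by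
  have h := (Real.hasDerivAt_sinh x).div (Real.hasDerivAt_cosh x) (Real.cosh_pos x).ne'
  have heq : Real.tanh = fun x => Real.sinh x / Real.cosh x := by
    funext y; exact Real.tanh_eq_sinh_div_cosh y
  have hc := (Real.cosh_pos x).ne'
  have key : 1 - Real.tanh x ^ 2 =
      (Real.cosh x * Real.cosh x - Real.sinh x * Real.sinh x) / Real.cosh x ^ 2 := by
    rw [Real.tanh_eq_sinh_div_cosh, div_pow]
    field_simp
  rw [key, heq]
  exact h

lemma tanh_lt_one' (x : ℝ) : Real.tanh x < 1 := by
  rw [Real.tanh_eq_sinh_div_cosh, div_lt_one (Real.cosh_pos x)]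
  nlinarith [Real.exp_pos (-x), Real.sinh_eq x, Real.cosh_eq x]

lemma neg_one_lt_tanh' (x : ℝ) : -1 < Real.tanh x := by
  rw [Real.tanh_eq_sinh_div_cosh, lt_div_iff₀ (Real.cosh_pos x)]
  nlinarith [Real.exp_pos x, Real.sinh_eq x, Real.cosh_eq x]

lemma one_add_tanh_pos (x : ℝ) : (0:ℝ) < 1 + Real.tanh x := by
  linarith [neg_one_lt_tanh' x]

lemma tanh_nonneg' {x : ℝ} (hx : 0 ≤ x) : 0 ≤ Real.tanh x := by
  rw [Real.tanh_eq_sinh_div_cosh]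
  exact div_nonneg (Real.sinh_nonneg_iff.2 hx) (Real.cosh_pos x).le

lemma one_sub_tanh_le' {x : ℝ} (hx : 0 ≤ x) : 1 - Real.tanh x ≤ 2 * Real.exp (-2 * x) := by
  have hc := Real.cosh_pos x
  rw [Real.tanh_eq_sinh_div_cosh]
  have h1 : 1 - Real.sinh x / Real.cosh x = Real.exp (-x) / Real.cosh x := by
    rw [Real.sinh_eq, Real.cosh_eq]
    field_simp
    rw [Real.exp_neg]
    field_simp
    ring
  rw [h1]
  have h2 : Real.exp x / 2 ≤ Real.cosh x := by
    rw [Real.cosh_eq]; nlinarith [Real.exp_pos (-x)]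
  have h3 : Real.exp (-x) / Real.cosh x ≤ Real.exp (-x) / (Real.exp x / 2) :=
    div_le_div_of_nonneg_left (Real.exp_pos (-x)).le (by positivity) h2
  have h4 : Real.exp (-x) / (Real.exp x / 2) = 2 * Real.exp (-2 * x) := by
    rw [show (-2:ℝ) * x = -x + -x by ring, Real.exp_add, Real.exp_neg]
    field_simp
  linarith

lemma one_sub_tanh_sq_le {x : ℝ} (hx : 0 ≤ x) :
    1 - Real.tanh x ^ 2 ≤ 4 * Real.exp (-2 * x) := by
  have h1 := one_sub_tanh_le' hx
  have h2 := tanh_lt_one' x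
  have h3 := neg_one_lt_tanh' x
  nlinarith

lemma exp_le_one_sub_tanh_sq {x : ℝ} (hx : 0 ≤ x) :
    Real.exp (-2 * x) ≤ 1 - Real.tanh x ^ 2 := by
  have key : 1 - Real.tanh x ^ 2 = 1 / Real.cosh x ^ 2 := by
    rw [Real.tanh_eq_sinh_div_cosh, div_pow]
    have hc := (Real.cosh_pos x).ne'
    field_simp
    linarith [Real.cosh_sq x]
  rw [key]
  have hce : Real.cosh x ≤ Real.exp x := by
    rw [Real.cosh_eq]
    have := Real.exp_le_exp.2 (neg_le_self hx)
    linarith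
  have hc := Real.cosh_pos x
  have h2 : Real.cosh x ^ 2 ≤ Real.exp x ^ 2 := by nlinarith
  have hep : (0:ℝ) < Real.exp x ^ 2 := by positivity
  have : 1 / Real.exp x ^ 2 ≤ 1 / Real.cosh x ^ 2 :=
    div_le_div_of_nonneg_left zero_le_one (by positivity) h2
  have he : Real.exp (-2 * x) = 1 / Real.exp x ^ 2 := by
    rw [show (-2:ℝ) * x = -(x + x) by ring, Real.exp_neg, Real.exp_add]
    rw [pow_two, one_div]
  rw [he]; exact this

lemma one_sub_tanh_sq_pos (x : ℝ) : (0:ℝ) < 1 - Real.tanh x ^ 2 := by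
  nlinarith [tanh_lt_one' x, neg_one_lt_tanh' x]
end helpers

noncomputable def usol (s : ℝ) : ℝ :=
  Real.tanh s ^ 2 / 3 - Real.tanh s / 4 - s * (1 - Real.tanh s ^ 2) / 4
    - Real.tanh s / (6 * (1 + Real.tanh s))

noncomputable def usol1 (s : ℝ) : ℝ :=
  2 * Real.tanh s / 3 * (1 - Real.tanh s ^ 2) - (1 - Real.tanh s ^ 2) / 2
    + s * Real.tanh s * (1 - Real.tanh s ^ 2) / 2
    - (1 - Real.tanh s ^ 2) / (6 * (1 + Real.tanh s) ^ 2)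

noncomputable def usol2 (s : ℝ) : ℝ :=
  2 / 3 * (1 - Real.tanh s ^ 2) * ((1 - Real.tanh s ^ 2) - 2 * Real.tanh s ^ 2)
    + 3 / 2 * Real.tanh s * (1 - Real.tanh s ^ 2)
    + s * ((1 - Real.tanh s ^ 2) ^ 2 / 2 - Real.tanh s ^ 2 * (1 - Real.tanh s ^ 2))
    + (1 - Real.tanh s ^ 2) / (3 * (1 + Real.tanh s) ^ 2)

lemma usol_hasDerivAt (s : ℝ) : HasDerivAt usol (usol1 s) s := by
  have ht := tanh_hasDerivAt s
  have h1 : (0:ℝ) < 1 + Real.tanh s := one_add_tanh_pos s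
  have h6 : (6 * (1 + Real.tanh s)) ≠ 0 := by positivity
  have H := ((((ht.pow 2).div_const 3).sub (ht.div_const 4)).sub
      (((hasDerivAt_id s).mul ((hasDerivAt_const s (1:ℝ)).sub (ht.pow 2))).div_const 4)).sub
      (ht.div (((hasDerivAt_const s (6:ℝ)).mul ((hasDerivAt_const s (1:ℝ)).add ht))) h6)
  refine H.congr_deriv (Eq.symm ?_)
  simp only [Pi.sub_apply, Pi.add_apply, Pi.mul_apply, Pi.div_apply, Pi.pow_apply, Pi.neg_apply, id_eq, Nat.cast_ofNat]
  unfold usol1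
  have h1' : (1 + Real.tanh s) ≠ 0 := h1.ne'
  field_simp
  ring

lemma usol1_hasDerivAt (s : ℝ) : HasDerivAt usol1 (usol2 s) s := by
  have ht := tanh_hasDerivAt s
  have h1 : (0:ℝ) < 1 + Real.tanh s := one_add_tanh_pos s
  have h6 : (6 * (1 + Real.tanh s) ^ 2) ≠ 0 := by positivity
  have e1 := ((ht.const_mul (2:ℝ)).div_const 3).mul ((hasDerivAt_const s (1:ℝ)).sub (ht.pow 2))
  have e2 := ((hasDerivAt_const s (1:ℝ)).sub (ht.pow 2)).div_const 2
  have e3 := (((hasDerivAt_id s).mul ht).mul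
      ((hasDerivAt_const s (1:ℝ)).sub (ht.pow 2))).div_const 2
  have e4 := ((hasDerivAt_const s (1:ℝ)).sub (ht.pow 2)).div
      ((((hasDerivAt_const s (1:ℝ)).add ht).pow 2).const_mul 6) h6
  have H := ((e1.sub e2).add e3).sub e4
  refine H.congr_deriv (Eq.symm ?_)
  simp only [Pi.sub_apply, Pi.add_apply, Pi.mul_apply, Pi.div_apply, Pi.pow_apply, Pi.neg_apply, id_eq, Nat.cast_ofNat]
  unfold usol2
  have h1' : (1 + Real.tanh s) ≠ 0 := h1.ne'
  field_simp
  ring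

lemma usol_ode (s : ℝ) :
    usol2 s - (6 * Real.tanh s ^ 2 - 2) * usol s = 1 - Real.tanh s ^ 2 := by
  have h1' : (1 + Real.tanh s) ≠ 0 := (one_add_tanh_pos s).ne'
  unfold usol usol2
  field_simp
  ring


noncomputable def phi (t : ℝ) : ℝ := (1 - hetero t ^ 2) / Real.sqrt 2
noncomputable def wsol (t : ℝ) : ℝ := Real.sqrt 2 * usol (t / Real.sqrt 2)

lemma sqrt2_pos : (0:ℝ) < Real.sqrt 2 := Real.sqrt_pos.2 (by norm_num)
lemma sqrt2_mul_self : Real.sqrt 2 * Real.sqrt 2 = 2 := Real.mul_self_sqrt (by norm_num)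
lemma sqrt2_sq : Real.sqrt 2 ^ 2 = 2 := Real.sq_sqrt (by norm_num)

lemma hetero_hasDerivAt (t : ℝ) : HasDerivAt hetero (phi t) t := by
  have h := (tanh_hasDerivAt (t / Real.sqrt 2)).comp t
    ((hasDerivAt_id t).div_const (Real.sqrt 2))
  refine h.congr_deriv (Eq.symm ?_)
  unfold phi hetero
  field_simp

lemma deriv_hetero : deriv hetero = phi := funext fun t => (hetero_hasDerivAt t).deriv

lemma phi_hasDerivAt (t : ℝ) :
    HasDerivAt phi (-(hetero t) * (1 - hetero t ^ 2)) t := by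
  have h := (((hasDerivAt_const t (1:ℝ)).sub ((hetero_hasDerivAt t).pow 2)).div_const
    (Real.sqrt 2))
  refine h.congr_deriv (Eq.symm ?_)
  have hs := sqrt2_mul_self
  have h0 := sqrt2_pos.ne'
  unfold phi
  field_simp
  rw [sqrt2_sq]
  ring

lemma phi1_hasDerivAt (t : ℝ) :
    HasDerivAt (fun t => -(hetero t) * (1 - hetero t ^ 2))
      ((3 * hetero t ^ 2 - 1) * phi t) t := by
  have h := ((hetero_hasDerivAt t).neg).mul
    ((hasDerivAt_const t (1:ℝ)).sub ((hetero_hasDerivAt t).pow 2))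
  refine h.congr_deriv (Eq.symm ?_)
  simp only [Pi.sub_apply, Pi.add_apply, Pi.mul_apply, Pi.div_apply, Pi.pow_apply, Pi.neg_apply, id_eq, Nat.cast_ofNat]
  ring

lemma wsol_hasDerivAt (t : ℝ) : HasDerivAt wsol (usol1 (t / Real.sqrt 2)) t := by
  have h := (((usol_hasDerivAt (t / Real.sqrt 2)).comp t
    ((hasDerivAt_id t).div_const (Real.sqrt 2))).const_mul (Real.sqrt 2))
  refine h.congr_deriv (Eq.symm ?_)
  have h0 := sqrt2_pos.ne'
  field_simp

lemma wsol1_hasDerivAt (t : ℝ) :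
    HasDerivAt (fun t => usol1 (t / Real.sqrt 2)) (usol2 (t / Real.sqrt 2) / Real.sqrt 2) t := by
  have h := (usol1_hasDerivAt (t / Real.sqrt 2)).comp t
    ((hasDerivAt_id t).div_const (Real.sqrt 2))
  refine h.congr_deriv (Eq.symm ?_)
  rw [div_eq_mul_one_div]

lemma deriv_wsol : deriv wsol = fun t => usol1 (t / Real.sqrt 2) :=
  funext fun t => (wsol_hasDerivAt t).deriv

lemma deriv2_wsol (t : ℝ) :
    deriv (deriv wsol) t = usol2 (t / Real.sqrt 2) / Real.sqrt 2 := by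
  rw [deriv_wsol]
  exact (wsol1_hasDerivAt t).deriv

lemma wsol_ode (t : ℝ) :
    deriv (deriv wsol) t - (3 * hetero t ^ 2 - 1) * wsol t = deriv hetero t := by
  rw [deriv_hetero, deriv2_wsol]
  have key := usol_ode (t / Real.sqrt 2)
  unfold phi wsol hetero
  have h0 := sqrt2_pos.ne'
  field_simp
  linear_combination key + (usol (t / Real.sqrt 2)
    - 3 * Real.tanh (t / Real.sqrt 2) ^ 2 * usol (t / Real.sqrt 2)) * sqrt2_sq


lemma contDiff_tanh : ContDiff ℝ 2 Real.tanh := by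
  have heq : Real.tanh = fun x => Real.sinh x / Real.cosh x := by
    funext y; exact Real.tanh_eq_sinh_div_cosh y
  rw [heq]
  exact Real.contDiff_sinh.div Real.contDiff_cosh fun x => (Real.cosh_pos x).ne'

lemma contDiff_usol : ContDiff ℝ 2 usol := by
  unfold usol
  have h1 : ∀ s : ℝ, (6 * (1 + Real.tanh s)) ≠ 0 := fun s => by
    have := one_add_tanh_pos s; positivity
  exact ((((contDiff_tanh.pow 2).div_const 3).sub (contDiff_tanh.div_const 4)).sub
      ((contDiff_id.mul (contDiff_const.sub (contDiff_tanh.pow 2))).div_const 4)).sub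
    (contDiff_tanh.div (contDiff_const.mul (contDiff_const.add contDiff_tanh)) h1)

lemma contDiff_wsol : ContDiff ℝ 2 wsol := by
  unfold wsol
  exact contDiff_const.mul (contDiff_usol.comp (contDiff_id.div_const _))

lemma wsol_zero : wsol 0 = 0 := by
  unfold wsol usol
  simp [Real.tanh_zero]

lemma usol_decay {s : ℝ} (hs : 0 ≤ s) : |usol s| ≤ 3 * Real.exp (-s) := by
  have h0 : 0 ≤ Real.tanh s := tanh_nonneg' hs
  have h1 : Real.tanh s < 1 := tanh_lt_one' s
  have h2 := one_sub_tanh_le' hs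
  have h3 := one_sub_tanh_sq_le hs
  have hE : (0:ℝ) < Real.exp (-2 * s) := Real.exp_pos _
  have he : (0:ℝ) < Real.exp (-s) := Real.exp_pos _
  have h5 : Real.exp (-2 * s) ≤ Real.exp (-s) := Real.exp_le_exp.2 (by linarith)
  have h6 : (0:ℝ) < 1 + Real.tanh s := by linarith
  have h4 : s * Real.exp (-2 * s) ≤ Real.exp (-s) := by
    have hse : s ≤ Real.exp s := by linarith [Real.add_one_le_exp s]
    have hprod : Real.exp (-2 * s) * Real.exp s = Real.exp (-s) := by
      rw [← Real.exp_add]; ring_nf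
    nlinarith
  set T := Real.tanh s with hT
  have hD : T / (6 * (1 + T)) = 1 / 12 - (1 - T) / (12 * (1 + T)) := by
    field_simp
    ring
  have hD2 : (1 - T) / (12 * (1 + T)) ≤ (1 - T) / 12 := by
    rw [div_le_div_iff₀ (by positivity) (by norm_num)]
    nlinarith
  have hD3 : 0 ≤ (1 - T) / (12 * (1 + T)) := div_nonneg (by linarith) (by positivity)
  have hC : s * (1 - T ^ 2) ≤ 4 * Real.exp (-s) := by nlinarith
  have hC0 : 0 ≤ s * (1 - T ^ 2) := mul_nonneg hs (by nlinarith)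
  rw [abs_le]
  unfold usol
  rw [← hT, hD]
  constructor <;> nlinarith

lemma sqrt2_le : Real.sqrt 2 ≤ 5 / 3 := by
  nlinarith [sqrt2_sq, Real.sqrt_nonneg 2]

lemma wsol_decay {t : ℝ} (ht : 0 ≤ t) : |wsol t| ≤ 5 * Real.exp (-(1 / 2) * t) := by
  have hs : 0 ≤ t / Real.sqrt 2 := by positivity
  have h1 := usol_decay hs
  have h2 : |wsol t| = Real.sqrt 2 * |usol (t / Real.sqrt 2)| := by
    unfold wsol
    rw [abs_mul, abs_of_nonneg (Real.sqrt_nonneg 2)]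
  have h3 : Real.exp (-(t / Real.sqrt 2)) ≤ Real.exp (-(1 / 2) * t) := by
    apply Real.exp_le_exp.2
    have hinv : (1:ℝ) / 2 ≤ 1 / Real.sqrt 2 := by
      rw [div_le_div_iff₀ (by norm_num) sqrt2_pos]
      nlinarith [sqrt2_sq, Real.sqrt_nonneg 2]
    have h4 : (1 / 2) * t ≤ t / Real.sqrt 2 := by
      rw [show t / Real.sqrt 2 = t * (1 / Real.sqrt 2) by rw [mul_one_div]]
      nlinarith [mul_le_mul_of_nonneg_left hinv ht]
    linarith
  have he := Real.exp_pos (-(t / Real.sqrt 2))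
  have habs : 0 ≤ |usol (t / Real.sqrt 2)| := abs_nonneg _
  rw [h2]
  calc Real.sqrt 2 * |usol (t / Real.sqrt 2)| ≤ (5 / 3) * (3 * Real.exp (-(t / Real.sqrt 2))) := by
        apply mul_le_mul sqrt2_le h1 habs (by norm_num)
    _ = 5 * Real.exp (-(t / Real.sqrt 2)) := by ring
    _ ≤ 5 * Real.exp (-(1 / 2) * t) := by linarith

lemma wsol_tendsto : Filter.Tendsto wsol Filter.atTop (nhds 0) := by
  have hg : Filter.Tendsto (fun t : ℝ => 5 * Real.exp (-(1 / 2) * t)) Filter.atTop (nhds 0) := by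
    have h1 : Filter.Tendsto (fun t : ℝ => -(1 / 2) * t) Filter.atTop Filter.atBot := by
      apply Filter.tendsto_id.const_mul_atTop_of_neg (by norm_num)
    have h2 := Real.tendsto_exp_atBot.comp h1
    have := h2.const_mul (5:ℝ)
    simpa using this
  apply squeeze_zero_norm' _ hg
  filter_upwards [Filter.eventually_ge_atTop (0:ℝ)] with t ht
  exact wsol_decay ht



lemma phi_pos (t : ℝ) : 0 < phi t :=
  div_pos (one_sub_tanh_sq_pos _) sqrt2_pos

lemma phi_le_one (t : ℝ) : phi t ≤ 1 := by
  unfold phi hetero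
  rw [div_le_one sqrt2_pos]
  nlinarith [sq_nonneg (Real.tanh (t / Real.sqrt 2)), sqrt2_sq, Real.sqrt_nonneg 2]

lemma phi_upper {t : ℝ} (ht : 0 ≤ t) : phi t ≤ 4 * Real.exp (-2 / Real.sqrt 2 * t) := by
  have hs : 0 ≤ t / Real.sqrt 2 := div_nonneg ht sqrt2_pos.le
  have h := one_sub_tanh_sq_le hs
  have harg : (-2 : ℝ) * (t / Real.sqrt 2) = -2 / Real.sqrt 2 * t := by ring
  rw [harg] at h
  unfold phi hetero
  have h1 : (1:ℝ) ≤ Real.sqrt 2 := by nlinarith [sqrt2_sq, Real.sqrt_nonneg 2]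
  have h2 : (0:ℝ) < 1 - Real.tanh (t / Real.sqrt 2) ^ 2 := one_sub_tanh_sq_pos _
  have h3 : (1 - Real.tanh (t / Real.sqrt 2) ^ 2) / Real.sqrt 2
      ≤ 1 - Real.tanh (t / Real.sqrt 2) ^ 2 := div_le_self h2.le h1
  linarith

lemma phi_lower {t : ℝ} (ht : 0 ≤ t) :
    Real.exp (-2 / Real.sqrt 2 * t) / Real.sqrt 2 ≤ phi t := by
  have hs : 0 ≤ t / Real.sqrt 2 := div_nonneg ht sqrt2_pos.le
  have h := exp_le_one_sub_tanh_sq hs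
  have harg : (-2 : ℝ) * (t / Real.sqrt 2) = -2 / Real.sqrt 2 * t := by ring
  rw [harg] at h
  unfold phi hetero
  exact (div_le_div_iff_of_pos_right sqrt2_pos).2 h

lemma mono_of_hasDerivAt_nonneg {f g : ℝ → ℝ}
    (h : ∀ t ∈ Set.Ioi (0:ℝ), HasDerivAt f (g t) t)
    (hg : ∀ t ∈ Set.Ioi (0:ℝ), 0 ≤ g t)
    {x y : ℝ} (hx : 0 < x) (hxy : x ≤ y) : f x ≤ f y := by
  have hmono : MonotoneOn f (Set.Ioi 0) := by
    apply monotoneOn_of_deriv_nonneg (convex_Ioi 0)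
    · exact fun t ht => ((h t ht).continuousAt).continuousWithinAt
    · intro t ht
      rw [interior_Ioi] at ht
      exact ((h t ht).differentiableAt).differentiableWithinAt
    · intro t ht
      rw [interior_Ioi] at ht
      rw [(h t ht).deriv]
      exact hg t ht
  exact hmono hx (lt_of_lt_of_le hx hxy) hxy

lemma eq_of_hasDerivAt_zero {f : ℝ → ℝ}
    (h : ∀ t ∈ Set.Ioi (0:ℝ), HasDerivAt f 0 t)
    {x y : ℝ} (hx : 0 < x) (hy : 0 < y) : f x = f y := by
  have key : ∀ {a b : ℝ}, 0 < a → a ≤ b → f a = f b := by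
    intro a b ha hab
    have h1 : f a ≤ f b :=
      mono_of_hasDerivAt_nonneg h (fun t _ => le_refl 0) ha hab
    have h2 : (fun t => -f t) a ≤ (fun t => -f t) b := by
      apply mono_of_hasDerivAt_nonneg (g := fun _ => (0:ℝ))
        (fun t ht => (h t ht).neg.congr_deriv neg_zero) (fun t _ => le_refl 0) ha hab
    simp only [neg_le_neg_iff] at h2
    linarith
  rcases le_total x y with hxy | hyx
  · exact key hx hxy
  · exact (key hy hyx).symm

lemma no_growth (G d : ℝ → ℝ) (c : ℝ) (hc : 0 < c)
    (hG : ∀ t ∈ Set.Ioi (0:ℝ), HasDerivAt G (c / phi t ^ 2) t)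
    (hdG : ∀ t ∈ Set.Ioi (0:ℝ), d t = G t * phi t)
    (hl : Filter.Tendsto d Filter.atTop (nhds 0)) : False := by
  set κ : ℝ := c * Real.sqrt 2 / 64 with hκ
  have hκpos : 0 < κ := by positivity
  set m : ℝ → ℝ := fun t => κ * Real.exp (4 / Real.sqrt 2 * t) with hm
  have hmd : ∀ t : ℝ, HasDerivAt m (c / 16 * Real.exp (4 / Real.sqrt 2 * t)) t := by
    intro t
    have h1 := ((Real.hasDerivAt_exp (4 / Real.sqrt 2 * t)).comp t
      ((hasDerivAt_id t).const_mul (4 / Real.sqrt 2))).const_mul κ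
    refine h1.congr_deriv (Eq.symm ?_)
    rw [hκ]
    have h0 := sqrt2_pos.ne'
    field_simp
    ring
  -- derivative of G dominates that of m
  have hdom : ∀ t ∈ Set.Ioi (0:ℝ), c / 16 * Real.exp (4 / Real.sqrt 2 * t) ≤ c / phi t ^ 2 := by
    intro t ht
    have ht0 : (0:ℝ) ≤ t := (le_of_lt ht)
    have hup := phi_upper ht0
    have hp := phi_pos t
    have he : (0:ℝ) < Real.exp (-2 / Real.sqrt 2 * t) := Real.exp_pos _
    have hsq : phi t ^ 2 ≤ 16 * Real.exp (-2 / Real.sqrt 2 * t) ^ 2 := by nlinarith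
    have h16 : (0:ℝ) < 16 * Real.exp (-2 / Real.sqrt 2 * t) ^ 2 := by positivity
    have hdiv : c / (16 * Real.exp (-2 / Real.sqrt 2 * t) ^ 2) ≤ c / phi t ^ 2 :=
      div_le_div_of_nonneg_left hc.le (pow_pos hp 2) hsq
    have heq : c / (16 * Real.exp (-2 / Real.sqrt 2 * t) ^ 2)
        = c / 16 * Real.exp (4 / Real.sqrt 2 * t) := by
      rw [sq, ← Real.exp_add,
        show -2 / Real.sqrt 2 * t + -2 / Real.sqrt 2 * t = -(4 / Real.sqrt 2 * t) by ring,
        Real.exp_neg]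
      have hne := Real.exp_ne_zero (4 / Real.sqrt 2 * t)
      field_simp
    rw [← heq]
    exact hdiv
  -- M := G - m is monotone on (0, ∞)
  have hMd : ∀ t ∈ Set.Ioi (0:ℝ), HasDerivAt (fun t => G t - m t)
      (c / phi t ^ 2 - c / 16 * Real.exp (4 / Real.sqrt 2 * t)) t :=
    fun t ht => (hG t ht).sub (hmd t)
  have hMmono : ∀ t : ℝ, 1 ≤ t → G 1 - m 1 ≤ G t - m t := by
    intro t ht
    exact mono_of_hasDerivAt_nonneg hMd
      (fun s hs => by linarith [hdom s hs]) one_pos ht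
  -- lower bound for d
  have hlow : ∀ t : ℝ, 1 ≤ t → -|G 1 - m 1| + c / 64 * Real.exp (Real.sqrt 2 * t) ≤ d t := by
    intro t ht
    have ht0 : (0:ℝ) < t := lt_of_lt_of_le one_pos ht
    have hp := phi_pos t
    have hup := phi_le_one t
    have hGt : G 1 - m 1 + m t ≤ G t := by linarith [hMmono t ht]
    have hd : d t = G t * phi t := hdG t (Set.mem_Ioi.2 ht0)
    have h1 : (G 1 - m 1 + m t) * phi t ≤ d t := by
      rw [hd]
      exact mul_le_mul_of_nonneg_right hGt hp.le
    have h2 : -|G 1 - m 1| ≤ (G 1 - m 1) * phi t := by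
      have := abs_nonneg (G 1 - m 1)
      have h3 : |(G 1 - m 1) * phi t| ≤ |G 1 - m 1| := by
        rw [abs_mul, abs_of_pos hp]
        nlinarith [abs_nonneg (G 1 - m 1)]
      linarith [neg_abs_le ((G 1 - m 1) * phi t), h3]
    have hplow := phi_lower ht0.le
    have hexp : m t * phi t ≥ c / 64 * Real.exp (Real.sqrt 2 * t) := by
      have hmt : 0 < m t := by positivity
      have h4 : m t * phi t ≥ m t * (Real.exp (-2 / Real.sqrt 2 * t) / Real.sqrt 2) :=
        mul_le_mul_of_nonneg_left hplow hmt.le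
      have hrw2 : (2:ℝ) / Real.sqrt 2 = Real.sqrt 2 := by
        rw [div_eq_iff sqrt2_pos.ne']
        linear_combination -sqrt2_sq
      have e1 : Real.exp (4 / Real.sqrt 2 * t) * Real.exp (-2 / Real.sqrt 2 * t)
          = Real.exp (Real.sqrt 2 * t) := by
        rw [← Real.exp_add]
        congr 1
        rw [show 4 / Real.sqrt 2 * t + -2 / Real.sqrt 2 * t = 2 / Real.sqrt 2 * t by ring, hrw2]
      have h5 : m t * (Real.exp (-2 / Real.sqrt 2 * t) / Real.sqrt 2)
          = c / 64 * Real.exp (Real.sqrt 2 * t) := by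
        have e2 : m t * (Real.exp (-2 / Real.sqrt 2 * t) / Real.sqrt 2)
            = κ / Real.sqrt 2 * (Real.exp (4 / Real.sqrt 2 * t)
              * Real.exp (-2 / Real.sqrt 2 * t)) := by
          rw [hm]; ring
        rw [e2, e1, hκ]
        have h0 := sqrt2_pos.ne'
        field_simp
      linarith
    have hexpand : (G 1 - m 1 + m t) * phi t = (G 1 - m 1) * phi t + m t * phi t := by ring
    nlinarith
  -- contradiction with d → 0
  have hgrow : Filter.Tendsto (fun t : ℝ => -|G 1 - m 1| + c / 64 * Real.exp (Real.sqrt 2 * t))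
      Filter.atTop Filter.atTop := by
    apply Filter.tendsto_atTop_add_const_left
    apply Filter.Tendsto.const_mul_atTop (by positivity : (0:ℝ) < c / 64)
    exact Real.tendsto_exp_atTop.comp (Filter.Tendsto.const_mul_atTop sqrt2_pos Filter.tendsto_id)
  have hev1 : ∀ᶠ t : ℝ in Filter.atTop,
      (2:ℝ) ≤ -|G 1 - m 1| + c / 64 * Real.exp (Real.sqrt 2 * t) :=
    hgrow.eventually_ge_atTop 2
  have hev2 : ∀ᶠ t : ℝ in Filter.atTop, d t < 1 := by
    have := hl.eventually (eventually_lt_nhds (by norm_num : (0:ℝ) < 1))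
    exact this
  have hev3 : ∀ᶠ t : ℝ in Filter.atTop, (1:ℝ) ≤ t := Filter.eventually_ge_atTop 1
  rcases (hev1.and (hev2.and hev3)).exists with ⟨t, h1, h2, h3⟩
  linarith [hlow t h3]





/-- There is a unique `C²` function `w` on `[0,∞)` with `w'' − (3g² − 1)w = g'`,
`w(0) = 0` and `w → 0` at `∞`; moreover `w` is exponentially decaying. -/
theorem exists_unique_w :
    ∃ w : ℝ → ℝ,
      (ContDiffOn ℝ 2 w (Set.Ici 0) ∧
        (∀ t : ℝ, 0 ≤ t →
          deriv (deriv w) t - (3 * hetero t ^ 2 - 1) * w t = deriv hetero t) ∧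
        w 0 = 0 ∧ Filter.Tendsto w Filter.atTop (nhds 0)) ∧
      (∃ C > (0:ℝ), ∃ β > (0:ℝ), ∀ t : ℝ, 0 ≤ t → |w t| ≤ C * Real.exp (-β * t)) ∧
      (∀ w' : ℝ → ℝ,
        (ContDiffOn ℝ 2 w' (Set.Ici 0) ∧
          (∀ t : ℝ, 0 ≤ t →
            deriv (deriv w') t - (3 * hetero t ^ 2 - 1) * w' t = deriv hetero t) ∧
          w' 0 = 0 ∧ Filter.Tendsto w' Filter.atTop (nhds 0)) →
        ∀ t : ℝ, 0 ≤ t → w' t = w t) := by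
  refine ⟨wsol, ⟨contDiff_wsol.contDiffOn, fun t _ => wsol_ode t, wsol_zero, wsol_tendsto⟩,
    ⟨5, by norm_num, 1/2, by norm_num, fun t ht => wsol_decay ht⟩, ?_⟩
  rintro v ⟨hC2, hODE, hv0, hlim⟩ t htge
  -- the difference d := v - wsol
  set d : ℝ → ℝ := fun t => v t - wsol t with hd_def
  have hd0 : d 0 = 0 := by simp [hd_def, hv0, wsol_zero]
  have dlim : Filter.Tendsto d Filter.atTop (nhds 0) := by
    have := hlim.sub wsol_tendsto
    simpa using this
  -- derivatives of v on (0,∞)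
  have hvd : ∀ s ∈ Set.Ioi (0:ℝ), HasDerivAt v (deriv v s) s := by
    intro s hs
    have hmem : Set.Ici (0:ℝ) ∈ nhds s :=
      Filter.mem_of_superset (isOpen_Ioi.mem_nhds hs) Set.Ioi_subset_Ici_self
    exact ((hC2.contDiffAt hmem).differentiableAt (by norm_num)).hasDerivAt
  have hvd2 : ∀ s ∈ Set.Ioi (0:ℝ), HasDerivAt (deriv v) (deriv (deriv v) s) s := by
    intro s hs
    have hC2' : ContDiffOn ℝ 2 v (Set.Ioi 0) := hC2.mono Set.Ioi_subset_Ici_self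
    have hder : ContDiffOn ℝ 1 (deriv v) (Set.Ioi 0) :=
      hC2'.deriv_of_isOpen isOpen_Ioi (by norm_num)
    have := (hder.contDiffAt (isOpen_Ioi.mem_nhds hs)).differentiableAt (by norm_num)
    exact this.hasDerivAt
  -- ODEs rewritten
  have hODE' : ∀ s ∈ Set.Ioi (0:ℝ),
      deriv (deriv v) s = (3 * hetero s ^ 2 - 1) * v s + phi s := by
    intro s hs
    have := hODE s (le_of_lt hs)
    rw [deriv_hetero] at this
    linarith
  have hwODE : ∀ s : ℝ, usol2 (s / Real.sqrt 2) / Real.sqrt 2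
      = (3 * hetero s ^ 2 - 1) * wsol s + phi s := by
    intro s
    have := wsol_ode s
    rw [deriv_hetero, deriv2_wsol] at this
    linarith
  -- first derivative of d
  set D : ℝ → ℝ := fun s => deriv v s - usol1 (s / Real.sqrt 2) with hD_def
  have hd : ∀ s ∈ Set.Ioi (0:ℝ), HasDerivAt d (D s) s :=
    fun s hs => (hvd s hs).sub (wsol_hasDerivAt s)
  have hD : ∀ s ∈ Set.Ioi (0:ℝ), HasDerivAt D ((3 * hetero s ^ 2 - 1) * d s) s := by
    intro s hs
    have h1 := (hvd2 s hs).sub (wsol1_hasDerivAt s)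
    refine h1.congr_deriv (Eq.symm ?_)
    rw [hODE' s hs, hwODE s]
    simp only [hd_def]
    ring
  -- the Wronskian F is constant on (0,∞)
  set F : ℝ → ℝ := fun s => D s * phi s - d s * (-(hetero s) * (1 - hetero s ^ 2)) with hF_def
  have hF : ∀ s ∈ Set.Ioi (0:ℝ), HasDerivAt F 0 s := by
    intro s hs
    have h1 := ((hD s hs).mul (phi_hasDerivAt s)).sub ((hd s hs).mul (phi1_hasDerivAt s))
    refine h1.congr_deriv (Eq.symm ?_)
    ring
  have hFc : ∀ s ∈ Set.Ioi (0:ℝ), F s = F 1 :=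
    fun s hs => eq_of_hasDerivAt_zero hF hs one_pos
  -- quotient G
  set G : ℝ → ℝ := fun s => d s / phi s with hG_def
  have hGd : ∀ s ∈ Set.Ioi (0:ℝ), HasDerivAt G (F 1 / phi s ^ 2) s := by
    intro s hs
    have h1 := (hd s hs).div (phi_hasDerivAt s) (phi_pos s).ne'
    refine h1.congr_deriv (Eq.symm ?_)
    rw [← hFc s hs]
  have hdG : ∀ s ∈ Set.Ioi (0:ℝ), d s = G s * phi s := by
    intro s _
    simp only [hG_def]
    rw [div_mul_cancel₀ _ (phi_pos s).ne']
  -- the constant must be zero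
  have hc0 : F 1 = 0 := by
    rcases lt_trichotomy (F 1) 0 with hlt | heq | hgt
    · exfalso
      apply no_growth (fun s => -G s) (fun s => -d s) (-(F 1)) (by linarith)
      · intro s hs
        have := (hGd s hs).neg
        exact this.congr_deriv (neg_div _ _).symm
      · intro s hs
        rw [hdG s hs]
        ring
      · simpa using dlim.neg
    · exact heq
    · exfalso
      exact no_growth G d (F 1) hgt hGd hdG dlim
  -- hence G is constant on (0,∞)
  have hGc : ∀ s ∈ Set.Ioi (0:ℝ), G s = G 1 := by
    apply fun s hs => eq_of_hasDerivAt_zero ?_ hs one_pos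
    intro s hs
    have := hGd s hs
    rwa [hc0, zero_div] at this
  have hd_eq : ∀ s ∈ Set.Ioi (0:ℝ), d s = G 1 * phi s := by
    intro s hs
    rw [hdG s hs, hGc s hs]
  -- continuity of d at 0 from the right
  have hdc : Filter.Tendsto d (nhdsWithin 0 (Set.Ioi 0)) (nhds 0) := by
    have hcv : ContinuousWithinAt v (Set.Ici 0) 0 :=
      (hC2.continuousOn).continuousWithinAt (Set.self_mem_Ici)
    have hcw : ContinuousWithinAt wsol (Set.Ici 0) 0 :=
      contDiff_wsol.continuous.continuousWithinAt
    have : ContinuousWithinAt d (Set.Ici 0) 0 := hcv.sub hcw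
    have h2 := this.tendsto
    rw [hd_def] at h2 ⊢
    simp only [hv0, wsol_zero, sub_zero] at h2
    exact h2.mono_left (nhdsWithin_mono 0 Set.Ioi_subset_Ici_self)
  have hphic : Filter.Tendsto (fun s => G 1 * phi s) (nhdsWithin 0 (Set.Ioi 0))
      (nhds (G 1 * phi 0)) := by
    have : Continuous phi := by
      rw [continuous_iff_continuousAt]
      exact fun x => (phi_hasDerivAt x).continuousAt
    exact ((this.tendsto 0).const_mul (G 1)).mono_left nhdsWithin_le_nhds
  have hk : G 1 * phi 0 = 0 := by
    have hne : (nhdsWithin (0:ℝ) (Set.Ioi 0)).NeBot := nhdsGT_neBot 0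
    have hcongr : Filter.Tendsto d (nhdsWithin 0 (Set.Ioi 0)) (nhds (G 1 * phi 0)) := by
      apply hphic.congr'
      filter_upwards [self_mem_nhdsWithin] with s hs
      exact (hd_eq s hs).symm
    exact (tendsto_nhds_unique hdc hcongr).symm
  have hG1 : G 1 = 0 := by
    rcases mul_eq_zero.1 hk with h | h
    · exact h
    · exact absurd h (phi_pos 0).ne'
  -- conclude
  rcases eq_or_lt_of_le htge with heq | hlt
  · rw [← heq]
    rw [hv0, wsol_zero]
  · have := hd_eq t hlt
    rw [hG1, zero_mul] at this
    have : v t - wsol t = 0 := this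
    linarith
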